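/- (Mihoc's theorem) Let P be a k×k row-stochastic matrix such that 1 is a simple eigenvalue and π = πP, ∑π_i = 1 has a unique solution. Then for each column j, the column sums of cofactors Δ_{·j} := ∑_i Δ_{ij} of I − P are all equal and nonzero, Δ_{jj} = ∑_i Δ_{ij} P_{ij}, and the stationary distribution is given by π_i = Δ_{ii}/Δ_{·1}, i.e., the stationary probabilities are proportional to the diagonal cofactors of I − P. -/

import Mathlib

open Matrix Polynomial Finset in

/-- If `e * e = 0` and `M` has zero determinant and zero adjugate, then any
`e`-perturbation of some rows of `M` still has determinant zero. -/
lemma mihoc_aux_det_perturb {n : Type*} [Fintype n] [DecidableEq n] {R : Type*} [CommRing R]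
    (e : R) (he : e * e = 0) (M N : Matrix n n R)
    (hd : M.det = 0) (ha : M.adjugate = 0) :
    ∀ S : Finset n, (Matrix.of fun i j => M i j + if i ∈ S then e * N i j else 0).det = 0 := by
  intro S
  induction S using Finset.induction_on with
  | empty => simpa using (show (Matrix.of fun i j => M i j).det = 0 from hd)
  | @insert a S hna IH =>
    set M₁ : Matrix n n R := Matrix.of fun i j => M i j + if i ∈ S then e * N i j else 0 with hM₁
    have hstep : (Matrix.of fun i j => M i j + if i ∈ insert a S then e * N i j else 0)
        = M₁.updateRow a ((fun j => M a j) + e • fun j => N a j) := by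
      ext i j
      by_cases hia : i = a
      · subst hia
        simp [Finset.mem_insert, hna, M₁]
      · simp [updateRow_apply, hia, Finset.mem_insert, M₁]
    rw [hstep, det_updateRow_add, det_updateRow_smul]
    have h1 : M₁.updateRow a (fun j => M a j) = M₁ := by
      have : (fun j => M a j) = M₁ a := by
        funext j; simp [M₁, hna]
      rw [this, updateRow_eq_self]
    have h2 : (M.updateRow a fun j => N a j).det = 0 := by
      rw [← det_transpose, ← updateCol_transpose, ← cramer_apply,
        cramer_eq_adjugate_mulVec, ← adjugate_transpose, ha]
      simp
    have hmk : ∀ x : R, Ideal.Quotient.mk (Ideal.span {e}) (e * x) = 0 := by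
      intro x
      rw [Ideal.Quotient.eq_zero_iff_mem]
      exact Ideal.mul_mem_right _ _ (Ideal.subset_span rfl)
    have hmapeq : (M₁.updateRow a fun j => N a j).map (Ideal.Quotient.mk (Ideal.span {e}))
        = (M.updateRow a fun j => N a j).map (Ideal.Quotient.mk (Ideal.span {e})) := by
      ext i j
      by_cases hia : i = a
      · simp [hia]
      · by_cases hiS : i ∈ S
        · simp only [map_apply, updateRow_apply, hia, if_false, M₁, Matrix.of_apply,
            if_pos hiS, map_add, hmk, add_zero]
        · simp [updateRow_apply, hia, hiS, M₁]
    have h3 : (M₁.updateRow a fun j => N a j).det - (M.updateRow a fun j => N a j).det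
        ∈ Ideal.span ({e} : Set R) := by
      refine Ideal.Quotient.eq.mp ?_
      rw [RingHom.map_det, RingHom.map_det, RingHom.mapMatrix_apply, RingHom.mapMatrix_apply,
        hmapeq]
    obtain ⟨r, hr⟩ := Ideal.mem_span_singleton'.mp h3
    have h4 : (M₁.updateRow a fun j => N a j).det
        = (M.updateRow a fun j => N a j).det + r * e := by
      linear_combination -hr
    rw [h1, IH, h4, h2]
    rw [zero_add, zero_add, mul_comm r e, ← mul_assoc, he]
    ring

open Matrix Polynomial Finset TrivSqZeroExt DualNumber in
lemma mihoc_aux_adj_ne (k : ℕ) [NeZero k] (P : Matrix (Fin k) (Fin k) ℝ)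
    (hsimple : (Matrix.charpoly P).rootMultiplicity 1 = 1)
    (hd : (1 - P).det = 0) (ha : (1 - P).adjugate = 0) : False := by
  set p := Matrix.charpoly P with hp
  have hp0 : p ≠ 0 := (Matrix.charpoly_monic P).ne_zero
  obtain ⟨q, hq⟩ : ∃ q, p = (X - C 1) * q := by
    have := Polynomial.pow_rootMultiplicity_dvd p 1
    rwa [hsimple, pow_one] at this
  have hq1 : q.eval 1 ≠ 0 := by
    intro h
    obtain ⟨q', hq'⟩ := dvd_iff_isRoot.mpr h
    have hdvd : (X - C (1 : ℝ)) ^ 2 ∣ p := ⟨q', by rw [hq, hq']; ring⟩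
    have h2 : 2 ≤ p.rootMultiplicity 1 := (le_rootMultiplicity_iff hp0).mpr hdvd
    omega
  set φ := algebraMap ℝ (DualNumber ℝ) with hφ
  set x : DualNumber ℝ := 1 + ε with hx
  have key : (aeval x) p = 0 := by
    have h1 : (aeval x) p = ((charmatrix P).map (aeval x)).det := by
      rw [hp, Matrix.charpoly, AlgHom.map_det, AlgHom.mapMatrix_apply]
    have h2 : (charmatrix P).map (aeval x)
        = Matrix.of fun i j => ((1 - P).map φ) i j
            + if i ∈ (Finset.univ : Finset (Fin k)) then ε * (1 : Matrix (Fin k) (Fin k) (DualNumber ℝ)) i j else 0 := by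
      refine Matrix.ext fun i j => ?_
      by_cases hij : i = j
      · subst hij
        simp only [Matrix.map_apply, charmatrix_apply_eq, map_sub, aeval_X, aeval_C,
          Matrix.of_apply, Finset.mem_univ, if_pos, Matrix.one_apply_eq, mul_one,
          Matrix.sub_apply, _root_.map_one, hx]
        ring
      · simp only [Matrix.map_apply, charmatrix_apply_ne _ _ _ hij, map_neg, aeval_C,
          Matrix.of_apply, Finset.mem_univ, if_pos, Matrix.one_apply_ne hij, mul_zero,
          Matrix.sub_apply, map_sub, add_zero, map_zero, zero_sub, hφ]
    rw [h1, h2]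
    exact mihoc_aux_det_perturb ε DualNumber.eps_mul_eps ((1 - P).map φ) 1
      (by rw [← RingHom.mapMatrix_apply, ← RingHom.map_det, hd, map_zero])
      (by rw [← RingHom.mapMatrix_apply, ← RingHom.map_adjugate, ha]; simp) Finset.univ
  set z := (aeval x) q with hz
  have hεz : ε * z = 0 := by
    have h5 : (aeval x) p = ((aeval x) (X - C (1:ℝ))) * z := by rw [hq, _root_.map_mul]
    rw [key] at h5
    have hXC : (aeval x) (X - C (1:ℝ)) = ε := by
      rw [map_sub, aeval_X, aeval_C, hx]
      simp [Algebra.algebraMap_eq_smul_one]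
    rw [hXC] at h5
    exact h5.symm
  have hfst : z.fst = 0 := by
    have h6 := congrArg TrivSqZeroExt.snd hεz
    rw [TrivSqZeroExt.snd_mul, DualNumber.fst_eps, DualNumber.snd_eps] at h6
    simpa [op_smul_eq_mul] using h6
  apply hq1
  have h7 : (TrivSqZeroExt.fstHom ℝ ℝ ℝ) ((aeval x) q) = aeval ((TrivSqZeroExt.fstHom ℝ ℝ ℝ) x) q :=
    (Polynomial.aeval_algHom_apply _ _ _).symm
  have hfx : (TrivSqZeroExt.fstHom ℝ ℝ ℝ) x = 1 := by
    show TrivSqZeroExt.fst x = 1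
    rw [hx, TrivSqZeroExt.fst_add, DualNumber.fst_eps, TrivSqZeroExt.fst_one, add_zero]
  rw [hfx] at h7
  have h8 : z.fst = q.eval 1 := by
    rw [← Polynomial.coe_aeval_eq_eval, ← h7]; rfl
  rw [← h8, hfst]

open Matrix Polynomial Finset

/-- (Mihoc's theorem)  Let `P` be a `k×k` row-stochastic matrix for which `1`
is a simple eigenvalue and the stationary equations `π = πP`, `∑ π = 1` have a
unique solution.  Writing `Δ i j := adjugate (I - P) j i` for the
`(i,j)`-cofactor of `I - P`:  all column sums `Δ_{·j} = ∑ i, Δ i j` are equal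
and nonzero, `Δ j j = ∑ i, Δ i j * P i j`, and the stationary distribution is
`π i = Δ i i / Δ_{·1}` (stationary probabilities are proportional to the
diagonal cofactors of `I - P`). -/
theorem stmt_16 (k : ℕ) [NeZero k] (P : Matrix (Fin k) (Fin k) ℝ)
    (hnonneg : ∀ i j, 0 ≤ P i j) (hrow : ∀ i, ∑ j, P i j = 1)
    (hsimple : (Matrix.charpoly P).rootMultiplicity 1 = 1)
    (huniq : ∃! x : Fin k → ℝ, Matrix.vecMul x P = x ∧ ∑ i, x i = 1) :
    (∀ j j' : Fin k,
      ∑ i, Matrix.adjugate (1 - P) j i = ∑ i, Matrix.adjugate (1 - P) j' i) ∧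
    (∀ j : Fin k, ∑ i, Matrix.adjugate (1 - P) j i ≠ 0) ∧
    (∀ j : Fin k, Matrix.adjugate (1 - P) j j
        = ∑ i, Matrix.adjugate (1 - P) j i * P i j) ∧
    (Matrix.vecMul
        (fun i => Matrix.adjugate (1 - P) i i / ∑ i', Matrix.adjugate (1 - P) 0 i') P
      = (fun i => Matrix.adjugate (1 - P) i i / ∑ i', Matrix.adjugate (1 - P) 0 i') ∧
     (∑ i, Matrix.adjugate (1 - P) i i / ∑ i', Matrix.adjugate (1 - P) 0 i') = 1) := by
  classical
  set A : Matrix (Fin k) (Fin k) ℝ := 1 - P with hA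
  have hones : ∀ r : Fin k, ∑ j, A r j = 0 := by
    intro r
    simp only [hA, Matrix.sub_apply, Finset.sum_sub_distrib, hrow r]
    simp [Matrix.one_apply]
  have honesne : (fun _ : Fin k => (1 : ℝ)) ≠ 0 := by
    intro h
    exact one_ne_zero (congrFun h 0)
  have hmulones : ∀ (M : Matrix (Fin k) (Fin k) ℝ), (∀ r, ∑ j, M r j = 0) →
      M *ᵥ (fun _ => (1:ℝ)) = 0 := by
    intro M hM
    funext r
    simpa [Matrix.mulVec, dotProduct] using hM r
  have hdet : A.det = 0 := by
    rw [← Matrix.exists_mulVec_eq_zero_iff]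
    exact ⟨_, honesne, hmulones A hones⟩
  -- any vector with zero sum annihilates the adjugate from the left
  have hker : ∀ v : Fin k → ℝ, ∑ i, v i = 0 → Matrix.vecMul v A.adjugate = 0 := by
    intro v hv
    have h1 : Matrix.vecMul v A.adjugate = Matrix.cramer Aᵀ v := by
      rw [← Matrix.mulVec_transpose, Matrix.adjugate_transpose,
        Matrix.cramer_eq_adjugate_mulVec]
    rw [h1]
    funext i
    rw [Matrix.cramer_apply, Matrix.updateCol_transpose, Matrix.det_transpose]
    have : (A.updateRow i v).det = 0 := by
      rw [← Matrix.exists_mulVec_eq_zero_iff]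
      refine ⟨_, honesne, hmulones _ ?_⟩
      intro r
      by_cases hri : r = i
      · subst hri; simpa using hv
      · simpa [Matrix.updateRow_ne hri] using hones r
    simpa using this
  -- columns of the adjugate are constant
  have hconst : ∀ j i : Fin k, A.adjugate j i = A.adjugate 0 i := by
    intro j i
    have hv : ∑ l, (Pi.single j 1 - Pi.single 0 1 : Fin k → ℝ) l = 0 := by
      simp [Finset.sum_sub_distrib]
    have := congrFun (hker _ hv) i
    simp only [Matrix.vecMul, dotProduct, Pi.sub_apply, Pi.single_apply, sub_mul,
      Finset.sum_sub_distrib, ite_mul, one_mul, zero_mul, Pi.zero_apply] at this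
    rw [Finset.sum_ite_eq' Finset.univ j, Finset.sum_ite_eq' Finset.univ 0] at this
    simpa [sub_eq_zero] using this
  set c : Fin k → ℝ := fun i => A.adjugate 0 i with hc
  -- the common row is a left fixed vector of P
  have hadjA : A.adjugate * A = 0 := by
    rw [Matrix.adjugate_mul, hdet, zero_smul]
  have hcA : Matrix.vecMul c A = 0 := by
    funext i
    have := congrFun (congrFun hadjA 0) i
    simpa [Matrix.mul_apply, Matrix.vecMul, dotProduct, hc] using this
  have hcP : Matrix.vecMul c P = c := by
    have := hcA
    rw [hA, Matrix.vecMul_sub, Matrix.vecMul_one, sub_eq_zero] at this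
    exact this.symm
  have hcdot : ∀ j, ∑ i, c i * P i j = c j := by
    intro j
    have := congrFun hcP j
    simpa [Matrix.vecMul, dotProduct] using this
  set s : ℝ := ∑ i', A.adjugate 0 i' with hs
  -- s is nonzero
  have hsne : s ≠ 0 := by
    intro hs0
    obtain ⟨π, ⟨hπP, hπ1⟩, hπu⟩ := huniq
    have hsol : Matrix.vecMul (π + c) P = π + c := by
      rw [Matrix.add_vecMul, hπP, hcP]
    have hcs : (∑ i, c i) = 0 := by rw [← hs0]
    have hsum : ∑ i, (π + c) i = 1 := by
      simp only [Pi.add_apply, Finset.sum_add_distrib, hπ1, hcs, add_zero]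
    have hc0 : c = 0 := by
      have := hπu (π + c) ⟨hsol, hsum⟩
      have h := congrArg (fun x => x - π) this
      simpa [add_sub_cancel_left] using h
    have hadj0 : A.adjugate = 0 := by
      ext j i
      rw [hconst j i]
      exact congrFun hc0 i
    exact mihoc_aux_adj_ne k P hsimple hdet hadj0
  have hrowsum : ∀ j, ∑ i, A.adjugate j i = s := by
    intro j
    rw [hs]
    exact Finset.sum_congr rfl fun i _ => hconst j i
  refine ⟨fun j j' => by rw [hrowsum j, hrowsum j'], fun j => by rw [hrowsum j]; exact hsne,
    ?_, ?_, ?_⟩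
  · intro j
    calc A.adjugate j j = c j := hconst j j
    _ = ∑ i, c i * P i j := (hcdot j).symm
    _ = ∑ i, A.adjugate j i * P i j := by
        exact Finset.sum_congr rfl fun i _ => by rw [hconst j i]
  · funext j
    have : ∀ i, A.adjugate i i = c i := fun i => hconst i i
    calc Matrix.vecMul (fun i => A.adjugate i i / s) P j
        = ∑ i, (c i / s) * P i j := by
          simp only [Matrix.vecMul, dotProduct]
          exact Finset.sum_congr rfl fun i _ => by rw [this i]
    _ = (∑ i, c i * P i j) / s := by
          rw [Finset.sum_div]
          exact Finset.sum_congr rfl fun i _ => by ring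
    _ = c j / s := by rw [hcdot j]
    _ = A.adjugate j j / s := by rw [this j]
  · calc (∑ i, A.adjugate i i / s) = (∑ i, c i) / s := by
          rw [Finset.sum_div]
          exact Finset.sum_congr rfl fun i _ => by rw [hconst i i]
    _ = s / s := rfl
    _ = 1 := div_self hsne
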